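/- Let F : (Fin (2*d) → Fin n) → ℂ be a super-symmetric order-2d complex tensor, and suppose F = Σ_{i=1}^{r} B^i ⊗ B^i where each B^i : (Fin d → Fin n) → ℂ is partial symmetric with respect to its first m indices, with m < d. Then there exist order-d tensors A^i : (Fin d → Fin n) → ℂ, each partial symmetric with respect to its first m+1 indices, such that F = Σ_{i=1}^{r} A^i ⊗ A^i. -/

import Mathlib

/-- Lemma: if a super-symmetric order-`2d` tensor `F` decomposes as `∑ Bⁱ ⊗ Bⁱ` with each
`Bⁱ` partial symmetric with respect to its first `m` indices (`m < d`), then `F` also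
decomposes as `∑ Aⁱ ⊗ Aⁱ` (same number of terms) with each `Aⁱ` partial symmetric with
respect to its first `m + 1` indices. -/
theorem stmt_3 {d n m r : ℕ} (hm : m < d)
    (F : (Fin (d + d) → Fin n) → ℂ)
    (hsym : ∀ σ : Equiv.Perm (Fin (d + d)), ∀ w : Fin (d + d) → Fin n, F (w ∘ ⇑σ) = F w)
    (B : Fin r → (Fin d → Fin n) → ℂ)
    (hB : ∀ i, ∀ σ : Equiv.Perm (Fin d), (∀ p : Fin d, m ≤ (p : ℕ) → σ p = p) →
      ∀ u : Fin d → Fin n, B i (u ∘ ⇑σ) = B i u)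
    (hdecomp : ∀ w : Fin (d + d) → Fin n,
      F w = ∑ i, B i (fun p => w (Fin.castAdd d p)) * B i (fun p => w (Fin.natAdd d p))) :
    ∃ A : Fin r → (Fin d → Fin n) → ℂ,
      (∀ i, ∀ σ : Equiv.Perm (Fin d), (∀ p : Fin d, m + 1 ≤ (p : ℕ) → σ p = p) →
        ∀ u : Fin d → Fin n, A i (u ∘ ⇑σ) = A i u) ∧
      (∀ w : Fin (d + d) → Fin n,
        F w = ∑ i, A i (fun p => w (Fin.castAdd d p)) * A i (fun p => w (Fin.natAdd d p))) := by
  classical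
  set s : Finset (Equiv.Perm (Fin d)) :=
    Finset.univ.filter (fun σ => ∀ p : Fin d, m + 1 ≤ (p : ℕ) → σ p = p) with hs
  have hone : (1 : Equiv.Perm (Fin d)) ∈ s := by simp [hs]
  have hcardpos : 0 < s.card := Finset.card_pos.mpr ⟨1, hone⟩
  have hcard : (s.card : ℂ) ≠ 0 := Nat.cast_ne_zero.mpr hcardpos.ne'
  have hmem : ∀ σ : Equiv.Perm (Fin d),
      σ ∈ s ↔ ∀ p : Fin d, m + 1 ≤ (p : ℕ) → σ p = p := by
    intro σ; simp [hs]
  have hmul : ∀ σ τ : Equiv.Perm (Fin d), σ ∈ s → τ ∈ s → σ * τ ∈ s := by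
    intro σ τ hσ hτ
    rw [hmem] at *
    intro p hp
    simp [Equiv.Perm.mul_apply, hτ p hp, hσ p hp]
  have hinv : ∀ σ : Equiv.Perm (Fin d), σ ∈ s → σ⁻¹ ∈ s := by
    intro σ hσ
    rw [hmem] at *
    intro p hp
    have := hσ p hp
    conv_lhs => rw [← this]
    simp
  refine ⟨fun i u => (s.card : ℂ)⁻¹ * ∑ σ ∈ s, B i (u ∘ ⇑σ), ?_, ?_⟩
  · intro i τ hτ u
    have hτs : τ ∈ s := (hmem τ).mpr hτ
    have : ∑ σ ∈ s, B i ((u ∘ ⇑τ) ∘ ⇑σ) = ∑ σ ∈ s, B i (u ∘ ⇑σ) := by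
      refine Finset.sum_bij' (fun σ _ => τ * σ) (fun σ _ => τ⁻¹ * σ) ?_ ?_ ?_ ?_ ?_
      · intro σ hσ; exact hmul τ σ hτs hσ
      · intro σ hσ; exact hmul τ⁻¹ σ (hinv τ hτs) hσ
      · intro σ hσ; simp [← mul_assoc]
      · intro σ hσ; simp [← mul_assoc]
      · intro σ hσ
        rfl
    show (s.card : ℂ)⁻¹ * ∑ σ ∈ s, B i ((u ∘ ⇑τ) ∘ ⇑σ)
        = (s.card : ℂ)⁻¹ * ∑ σ ∈ s, B i (u ∘ ⇑σ)
    rw [this]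
  · intro w
    set u : Fin d → Fin n := fun p => w (Fin.castAdd d p) with hu
    set v : Fin d → Fin n := fun p => w (Fin.natAdd d p) with hv
    have key : ∀ σ τ : Equiv.Perm (Fin d),
        (∑ i, B i (u ∘ ⇑σ) * B i (v ∘ ⇑τ)) = F w := by
      intro σ τ
      set ρ : Equiv.Perm (Fin (d + d)) :=
        finSumFinEquiv.symm.trans ((Equiv.sumCongr σ τ).trans finSumFinEquiv) with hρ
      have h1 : (fun p => (w ∘ ⇑ρ) (Fin.castAdd d p)) = u ∘ ⇑σ := by
        funext p
        show w (ρ (Fin.castAdd d p)) = u (σ p)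
        rw [hρ]
        simp only [Equiv.trans_apply, finSumFinEquiv_symm_apply_castAdd,
          Equiv.sumCongr_apply, Sum.map_inl, finSumFinEquiv_apply_left]
        rfl
      have h2 : (fun p => (w ∘ ⇑ρ) (Fin.natAdd d p)) = v ∘ ⇑τ := by
        funext p
        show w (ρ (Fin.natAdd d p)) = v (τ p)
        rw [hρ]
        simp only [Equiv.trans_apply, finSumFinEquiv_symm_apply_natAdd,
          Equiv.sumCongr_apply, Sum.map_inr, finSumFinEquiv_apply_right]
        rfl
      calc (∑ i, B i (u ∘ ⇑σ) * B i (v ∘ ⇑τ))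
          = F (w ∘ ⇑ρ) := by rw [hdecomp (w ∘ ⇑ρ), h1, h2]
        _ = F w := hsym ρ w
    calc F w = (s.card : ℂ)⁻¹ * (s.card : ℂ)⁻¹ *
          ∑ σ ∈ s, ∑ τ ∈ s, ∑ i, B i (u ∘ ⇑σ) * B i (v ∘ ⇑τ) := by
          have h3 : ∑ σ ∈ s, ∑ τ ∈ s, ∑ i, B i (u ∘ ⇑σ) * B i (v ∘ ⇑τ)
              = (s.card : ℂ) * ((s.card : ℂ) * F w) := by
            rw [Finset.sum_congr rfl (fun σ _ => Finset.sum_congr rfl (fun τ _ => key σ τ))]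
            simp [Finset.sum_const, mul_comm]
          rw [h3]
          field_simp
      _ = (s.card : ℂ)⁻¹ * (s.card : ℂ)⁻¹ *
          ∑ i, ∑ σ ∈ s, ∑ τ ∈ s, B i (u ∘ ⇑σ) * B i (v ∘ ⇑τ) := by
          congr 1
          rw [Finset.sum_congr rfl (fun σ _ => Finset.sum_comm)]
          exact Finset.sum_comm
      _ = ∑ i, ((s.card : ℂ)⁻¹ * ∑ σ ∈ s, B i (u ∘ ⇑σ)) *
            ((s.card : ℂ)⁻¹ * ∑ τ ∈ s, B i (v ∘ ⇑τ)) := by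
          rw [Finset.mul_sum]
          refine Finset.sum_congr rfl fun i _ => ?_
          rw [← Finset.sum_mul_sum]
          ring
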